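/- Every separative commutative monoid M generated by two elements x and y, in which any two elements a, b of the submonoid generated by x and y satisfy a ≤ b or b ≤ a (where u ≤ w means w = u + z for some z), is a refinement monoid. -/
import Mathlib


/-- add(a) = the set of summands of positive finite multiples of a. -/
def addCl {M : Type*} [AddCommMonoid M] (a : M) : Set M :=
  {u | ∃ z : M, ∃ t : ℕ, 1 ≤ t ∧ u + z = t • a}

private lemma key_refine {M : Type*} [AddCommMonoid M]
    (hsep : ∀ a b c : M, a + c = b + c → c ∈ addCl a → c ∈ addCl b → a = b)
    (a b c d : M) (hb : ∃ z : M, b = a + z) (hc : ∃ z : M, c = a + z)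
    (hd : ∃ z : M, d = a + z) (heq : a + b = c + d) :
    ∃ e f g h : M, a = e + f ∧ b = g + h ∧ c = e + g ∧ d = f + h := by
  obtain ⟨w, rfl⟩ := hb
  obtain ⟨s, rfl⟩ := hc
  obtain ⟨t, rfl⟩ := hd
  have hmem : ∀ u : M, a ∈ addCl (a + u) := fun u => ⟨u, 1, le_refl 1, by simp⟩
  have hcan : a + w = a + (s + t) := by
    apply hsep _ _ a _ (hmem w) (hmem (s + t))
    have : a + (a + w) = a + (a + (s + t)) := by
      rw [heq]; abel
    calc a + w + a = a + (a + w) := by abel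
      _ = a + (a + (s + t)) := this
      _ = a + (s + t) + a := by abel
  exact ⟨a, 0, s, a + t, by simp, by rw [hcan]; abel, rfl, by simp⟩

/-- a separative commutative monoid generated by two elements in
which any two elements are comparable (a ≤ b or b ≤ a) is a refinement monoid. -/
theorem separative_total_refinement {M : Type*} [AddCommMonoid M]
    (hsep : ∀ a b c : M, a + c = b + c → c ∈ addCl a → c ∈ addCl b → a = b)
    (x y : M) (hgen : ∀ m : M, ∃ a b : ℕ, m = a • x + b • y)
    (htot : ∀ a b : M, (∃ z : M, b = a + z) ∨ (∃ z : M, a = b + z)) :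
    ∀ a b c d : M, a + b = c + d →
      ∃ e f g h : M, a = e + f ∧ b = g + h ∧ c = e + g ∧ d = f + h := by
  intro a b c d heq
  have trans : ∀ {p q r : M}, (∃ z : M, q = p + z) → (∃ z : M, r = q + z) →
      (∃ z : M, r = p + z) := by
    rintro p q r ⟨z1, rfl⟩ ⟨z2, rfl⟩; exact ⟨z1 + z2, by abel⟩
  rcases htot a b with hab | hba <;> rcases htot c d with hcd | hdc
  · rcases htot a c with hac | hca
    · exact key_refine hsep a b c d hab hac (trans hac hcd) heq
    · obtain ⟨e, f, g, h, h1, h2, h3, h4⟩ :=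
        key_refine hsep c d a b hcd hca (trans hca hab) heq.symm
      exact ⟨e, g, f, h, by rw [h3], by rw [h4], by rw [h1], by rw [h2]⟩
  · rcases htot a d with had | hda
    · obtain ⟨e, f, g, h, h1, h2, h3, h4⟩ :=
        key_refine hsep a b d c hab had (trans had hdc) (by rw [heq]; abel)
      exact ⟨f, e, h, g, by rw [h1]; abel, by rw [h2]; abel, by rw [h4],
        by rw [h3]⟩
    · obtain ⟨e, f, g, h, h1, h2, h3, h4⟩ :=
        key_refine hsep d c a b hdc hda (trans hda hab) (by rw [heq]; abel)
      exact ⟨g, e, h, f, by rw [h3]; abel, by rw [h4]; abel, by rw [h2],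
        by rw [h1]⟩
  · rcases htot b c with hbc | hcb
    · obtain ⟨e, f, g, h, h1, h2, h3, h4⟩ :=
        key_refine hsep b a c d hba hbc (trans hbc hcd) (by rw [← heq]; abel)
      exact ⟨g, h, e, f, by rw [h2], by rw [h1], by rw [h3]; abel,
        by rw [h4]; abel⟩
    · obtain ⟨e, f, g, h, h1, h2, h3, h4⟩ :=
        key_refine hsep c d b a hcd hcb (trans hcb hba) (by rw [← heq]; abel)
      exact ⟨f, h, e, g, by rw [h4], by rw [h3], by rw [h1]; abel,
        by rw [h2]; abel⟩
  · rcases htot b d with hbd | hdb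
    · obtain ⟨e, f, g, h, h1, h2, h3, h4⟩ :=
        key_refine hsep b a d c hba hbd (trans hbd hdc)
          (by rw [add_comm b a, heq, add_comm c d])
      exact ⟨h, g, f, e, by rw [h2]; abel, by rw [h1]; abel, by rw [h4]; abel,
        by rw [h3]; abel⟩
    · obtain ⟨e, f, g, h, h1, h2, h3, h4⟩ :=
        key_refine hsep d c b a hdc hdb (trans hdb hba)
          (by rw [add_comm d c, ← heq, add_comm a b])
      exact ⟨h, f, g, e, by rw [h4]; abel, by rw [h3]; abel, by rw [h2]; abel,
        by rw [h1]; abel⟩
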